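/- (Divergence principle.) Fix an integer m ≥ 2, reals δ > 0 and η > 1 − δ, and a nonnegative admissible test function f on ℝ^m with f(0, …, 0) > 0. Then there exist c > 0 and Q such that: for every integer q ≥ Q admitting a factorization q = u v² with integers u ≥ 1 and v > q^δ, every integer N ≥ 1 with (log N)/(log q) > η, and every integer b, one has R^(m)(N, b/q, f) ≥ c · f(0,…,0) · (N v/q)^m / N. -/

import Mathlib

open MeasureTheory Filter

/-- The list of the fractional parts of `x 1, …, x N`, sorted in increasing order. -/
noncomputable def sortedFracParts (N : ℕ) (x : ℕ → ℝ) : List ℝ :=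
  ((Finset.Icc 1 N).val.map fun n => Int.fract (x n)).sort (· ≤ ·)

/-- `nthBeta N x j` is `β_j`, the `j`-th smallest (1-indexed) among the fractional
parts of `x n`, `1 ≤ n ≤ N`. -/
noncomputable def nthBeta (N : ℕ) (x : ℕ → ℝ) (j : ℕ) : ℝ :=
  (sortedFracParts N x).getD (j - 1) 0

/-- An admissible test function on `ℝ^m`: symmetric under permutations of the
coordinates, invariant under translations along the diagonal, and compactly
supported modulo the diagonal. -/
def IsAdmissible {m : ℕ} (f : (Fin m → ℝ) → ℝ) : Prop :=
  (∀ (σ : Equiv.Perm (Fin m)) (x : Fin m → ℝ), f (x ∘ σ) = f x) ∧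
  (∀ (x : Fin m → ℝ) (t : ℝ), (f fun i => x i + t) = f x) ∧
  ∃ C : ℝ, ∀ x : Fin m → ℝ, f x ≠ 0 → ∀ i j, |x i - x j| ≤ C

open Classical in
/-- The `m`-level correlation `R^(m)(N, x, f)` of the fractional parts of the
sequence `x 1, …, x N`. -/
noncomputable def corr (m N : ℕ) (x : ℕ → ℝ) (f : (Fin m → ℝ) → ℝ) : ℝ :=
  (N : ℝ)⁻¹ * ∑ j ∈ Finset.univ.filter (fun j : Fin m → Fin N => StrictMono j),
      f fun i => N * nthBeta N x ((j i : ℕ) + 1)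

/-- `∫_{0 ≤ x₂ ≤ ⋯ ≤ x_{m+1}} f(0, x₂, …, x_{m+1}) dx₂ ⋯ dx_{m+1}`. -/
noncomputable def poissonValue (m : ℕ) (f : (Fin (m + 1) → ℝ) → ℝ) : ℝ :=
  ∫ y in {y : Fin m → ℝ | (∀ i, 0 ≤ y i) ∧ Monotone y}, f (Fin.cons 0 y)

open Classical in
/-- If at least `K` of the fractional parts vanish, then the `K` smallest ones vanish. -/
lemma nthBeta_eq_zero (N : ℕ) (x : ℕ → ℝ) (K j : ℕ)
    (hcount : K ≤ ((Finset.Icc 1 N).filter (fun n => Int.fract (x n) = 0)).card)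
    (hj : j < K) : nthBeta N x (j + 1) = 0 := by
  set l := sortedFracParts N x with hl
  have hsort : l.Pairwise (· ≤ ·) := Multiset.pairwise_sort _ _
  have hnn : ∀ y ∈ l, 0 ≤ y := by
    intro y hy
    rw [hl, sortedFracParts, Multiset.mem_sort] at hy
    obtain ⟨n, -, rfl⟩ := Multiset.mem_map.mp hy
    exact Int.fract_nonneg _
  have hcnt : K ≤ l.count 0 := by
    have h1 : l.count 0 = Multiset.count 0
        (((Finset.Icc 1 N).val.map fun n => Int.fract (x n))) := by
      rw [← Multiset.coe_count, hl, sortedFracParts, Multiset.sort_eq]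
    have h2 : Multiset.count 0 (((Finset.Icc 1 N).val.map fun n => Int.fract (x n)))
        = Multiset.card ((Finset.Icc 1 N).val.filter fun n => (0:ℝ) = Int.fract (x n)) :=
      Multiset.count_map _ _ _
    rw [h1, h2]
    have h3 : ((Finset.Icc 1 N).val.filter fun n => (0:ℝ) = Int.fract (x n))
        = ((Finset.Icc 1 N).filter (fun n => Int.fract (x n) = 0)).val := by
      rw [Finset.filter_val]
      exact Multiset.filter_congr (fun n _ => by constructor <;> (intro h; exact h.symm))
    rw [h3]
    exact hcount
  have hKlen : K ≤ l.length := hcnt.trans List.count_le_length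
  have hjlen : j < l.length := lt_of_lt_of_le hj hKlen
  rw [nthBeta]
  simp only [Nat.add_sub_cancel]
  rw [List.getD_eq_getElem _ _ hjlen]
  by_contra hne
  have hpos : 0 < l[j] := lt_of_le_of_ne (hnn _ (List.getElem_mem _)) (Ne.symm hne)
  have h1 : l.count 0 = (l.take j).count 0 + (l.drop j).count 0 := by
    rw [← List.count_append, List.take_append_drop]
  have h2 : (l.take j).count 0 ≤ j := by
    refine le_trans List.count_le_length ?_
    simp [List.length_take]
  have h3 : (l.drop j).count 0 = 0 := by
    rw [List.count_eq_zero]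
    intro hmem
    obtain ⟨i, hi, hgi⟩ := List.mem_iff_getElem.mp hmem
    have hlen' : j + i < l.length := by
      have hld : (l.drop j).length = l.length - j := List.length_drop
      omega
    rw [List.getElem_drop] at hgi
    have hle : l[j] ≤ l[j + i] := by
      have := hsort.rel_get_of_le (a := ⟨j, hjlen⟩) (b := ⟨j + i, hlen'⟩)
        (by simp only [Fin.mk_le_mk]; omega)
      simpa using this
    rw [hgi] at hle
    exact absurd hle (not_le.mpr hpos)
  omega

/-- The multiples of `u*v` in `[1, N]` give vanishing fractional parts. -/
lemma count_zero_fracts (N q u v b : ℕ) (hq : q = u * v ^ 2) (hq0 : 0 < q) :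
    N / (u * v) ≤ ((Finset.Icc 1 N).filter
      (fun n : ℕ => Int.fract ((b : ℝ) * (n : ℝ) ^ 2 / (q : ℝ)) = 0)).card := by
  classical
  have h1 : (Finset.Icc 1 N) = Finset.Ioc 0 N := Finset.Icc_add_one_left_eq_Ioc 0 N
  rw [h1, ← Nat.Ioc_filter_dvd_card_eq_div N (u * v)]
  apply Finset.card_le_card
  intro n hn
  simp only [Finset.mem_filter] at hn ⊢
  refine ⟨hn.1, ?_⟩
  obtain ⟨k, rfl⟩ := hn.2
  have hqne : (q : ℝ) ≠ 0 := Nat.cast_ne_zero.mpr hq0.ne'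
  have key : (b : ℝ) * ((u * v * k : ℕ) : ℝ) ^ 2 / (q : ℝ) = ((b * u * k ^ 2 : ℕ) : ℝ) := by
    rw [div_eq_iff hqne]
    push_cast [hq]
    ring
  rw [key, Int.fract_natCast]

open Classical in
/-- Counting strictly monotone tuples landing in the first `K` indices. -/
lemma card_strictMono_tuples (N K m : ℕ) (hN : 1 ≤ N) (hKN : K ≤ N) :
    K.choose m ≤ (Finset.univ.filter (fun j : Fin m → Fin N =>
      StrictMono j ∧ ∀ i, (j i : ℕ) < K)).card := by
  set T : Finset (Fin N) := Finset.univ.filter (fun i : Fin N => (i : ℕ) < K) with hT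
  have hTcard : T.card = K := by
    have himg : T = Finset.image (Fin.castLE hKN) Finset.univ := by
      ext i
      simp only [hT, Finset.mem_filter, Finset.mem_univ, true_and, Finset.mem_image]
      constructor
      · intro h; exact ⟨⟨(i : ℕ), h⟩, Fin.ext rfl⟩
      · rintro ⟨a, rfl⟩; exact a.2
    rw [himg, Finset.card_image_of_injective _ (Fin.castLE_injective hKN),
      Finset.card_univ, Fintype.card_fin]
  have hP : (T.powersetCard m).card = K.choose m := by
    rw [Finset.card_powersetCard, hTcard]
  rw [← hP]
  set dflt : Fin N := ⟨0, hN⟩ with hd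
  refine Finset.card_le_card_of_injOn
    ((fun s => if h : s.card = m then ⇑(s.orderEmbOfFin h) else fun _ => dflt :
      Finset (Fin N) → (Fin m → Fin N))) ?_ ?_
  · intro s hs
    obtain ⟨hsub, hcard⟩ := Finset.mem_powersetCard.mp hs
    simp only [dif_pos hcard, Finset.mem_coe, Finset.mem_filter, Finset.mem_univ, true_and]
    refine ⟨(s.orderEmbOfFin hcard).strictMono, fun i => ?_⟩
    have := hsub (s.orderEmbOfFin_mem hcard i)
    simp only [hT, Finset.mem_filter] at this
    exact this.2
  · intro s hs t ht hst
    obtain ⟨-, hcs⟩ := Finset.mem_powersetCard.mp hs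
    obtain ⟨-, hct⟩ := Finset.mem_powersetCard.mp ht
    simp only [dif_pos hcs, dif_pos hct] at hst
    apply Finset.coe_injective
    rw [← Finset.range_orderEmbOfFin s hcs, ← Finset.range_orderEmbOfFin t hct, hst]

/-- **Divergence principle.** Let `m ≥ 2`, `δ > 0`, `η > 1 - δ`, and let `f ≥ 0` be an
admissible test function with `f(0) > 0`.  If `q = u v²` with `v > q^δ` and
`log N / log q > η`, then for all `b`, `R^(m)(N, b/q, f) ≫ f(0) (N v / q)^m / N`. -/
theorem divergence_principle
    (m : ℕ) (hm : 2 ≤ m) (δ η : ℝ) (hδ : 0 < δ) (hη : 1 - δ < η)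
    (f : (Fin m → ℝ) → ℝ) (hf : IsAdmissible f) (hnonneg : ∀ x, 0 ≤ f x)
    (h0 : 0 < f (fun _ => 0)) :
    ∃ c : ℝ, 0 < c ∧ ∃ Q : ℕ, ∀ q : ℕ, Q ≤ q →
      ∀ u v : ℕ, 1 ≤ u → q = u * v ^ 2 → (q : ℝ) ^ δ < (v : ℝ) →
        ∀ N : ℕ, 1 ≤ N → η < Real.log N / Real.log q →
          ∀ b : ℕ, 1 ≤ b →
            c * f (fun _ => 0) * (((N : ℝ) * (v : ℝ)) / (q : ℝ)) ^ m / (N : ℝ)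
              ≤ corr m N (fun n => (b : ℝ) * (n : ℝ) ^ 2 / (q : ℝ)) f := by
  classical
  set ε : ℝ := η + δ - 1 with hε
  have hε0 : 0 < ε := by simp only [hε]; linarith
  refine ⟨((2:ℝ) ^ m * m.factorial)⁻¹, by positivity, ?_⟩
  have htend : Tendsto (fun q : ℕ => (q : ℝ) ^ ε) atTop atTop :=
    (tendsto_rpow_atTop hε0).comp tendsto_natCast_atTop_atTop
  have hev : ∀ᶠ q : ℕ in atTop, (2 * (m:ℝ) + 2 ≤ (q : ℝ) ^ ε) ∧ 2 ≤ q :=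
    (htend.eventually_ge_atTop _).and (eventually_ge_atTop 2)
  obtain ⟨Q, hQ⟩ := eventually_atTop.mp hev
  refine ⟨Q, fun q hq u v hu hquv hv N hN hlogN b hb => ?_⟩
  obtain ⟨hqε, hq2⟩ := hQ q hq
  -- basic positivity facts
  have hq0 : 0 < q := by omega
  have hq0R : (0:ℝ) < q := by exact_mod_cast hq0
  have hq1R : (1:ℝ) < q := by exact_mod_cast hq2
  have hv0R : (0:ℝ) < v := lt_trans (Real.rpow_pos_of_pos hq0R δ) hv
  have hv0 : 0 < v := by exact_mod_cast hv0R
  have hu0R : (0:ℝ) < u := by exact_mod_cast hu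
  have hN0R : (0:ℝ) < N := by exact_mod_cast hN
  set X : ℝ := ((N : ℝ) * (v : ℝ)) / (q : ℝ) with hX
  -- `q^η < N`
  have hlogq : 0 < Real.log q := Real.log_pos hq1R
  have hqη : (q:ℝ) ^ η < N := by
    have h1 : η * Real.log q < Real.log N := (lt_div_iff₀ hlogq).mp hlogN
    have h2 : (q:ℝ) ^ η = Real.exp (η * Real.log q) := by
      rw [Real.rpow_def_of_pos hq0R, mul_comm]
    rw [h2, ← Real.exp_log hN0R]
    exact Real.exp_lt_exp.mpr h1
  -- `2m+2 ≤ q^ε < X`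
  have hqεX : (q:ℝ) ^ ε < X := by
    have hεδ : η + δ = ε + 1 := by rw [hε]; ring
    have h1 : (q:ℝ) ^ η * (q:ℝ) ^ δ = (q:ℝ) ^ ε * q := by
      rw [← Real.rpow_add hq0R, hεδ, Real.rpow_add hq0R, Real.rpow_one]
    have h2 : (q:ℝ) ^ η * (q:ℝ) ^ δ < (N:ℝ) * v :=
      mul_lt_mul'' hqη hv (Real.rpow_pos_of_pos hq0R η).le (Real.rpow_pos_of_pos hq0R δ).le
    rw [hX, show (q:ℝ) ^ ε = ((q:ℝ) ^ ε * q) / q by rw [mul_div_cancel_right₀ _ hq0R.ne'],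
      ← h1]
    gcongr
  have hXbig : 2 * (m:ℝ) + 2 ≤ X := le_of_lt (lt_of_le_of_lt hqε hqεX)
  have hX0 : 0 < X := by
    have hpos2 : (0:ℝ) < 2 * m + 2 := by positivity
    linarith
  -- the number of multiples of uv
  set K : ℕ := N / (u * v) with hK
  have huv0 : 0 < u * v := Nat.mul_pos hu hv0
  have hXeq : X = (N : ℝ) / ((u:ℝ) * (v:ℝ)) := by
    rw [hX]
    have : (q : ℝ) = (u:ℝ) * (v:ℝ) ^ 2 := by exact_mod_cast congrArg (Nat.cast : ℕ → ℝ) hquv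
    rw [this]
    field_simp
  have hKX : X - 1 < (K : ℝ) := by
    have h1 : N < u * v * (K + 1) := Nat.lt_mul_div_succ N huv0
    have h1R : (N : ℝ) < (u:ℝ) * (v:ℝ) * ((K:ℝ) + 1) := by exact_mod_cast h1
    have huvR : (0:ℝ) < (u:ℝ) * (v:ℝ) := by positivity
    rw [hXeq]
    rw [div_sub_one huvR.ne', div_lt_iff₀ huvR]
    nlinarith
  have hKN : K ≤ N := Nat.div_le_self _ _
  have hmK : m ≤ K := by
    have : (m:ℝ) < K := by linarith
    exact_mod_cast this.le
  -- lower bound choose by (X/2)^m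
  have hcast : ((K + 1 - m : ℕ) : ℝ) = (K:ℝ) + 1 - m := by
    have : m ≤ K + 1 := by omega
    push_cast [this]
    ring
  have hhalf : X / 2 ≤ ((K + 1 - m : ℕ) : ℝ) := by
    rw [hcast]; linarith
  have hchoose : (X / 2) ^ m / m.factorial ≤ (K.choose m : ℝ) := by
    have h1 : (X / 2) ^ m ≤ ((K + 1 - m : ℕ) : ℝ) ^ m :=
      pow_le_pow_left₀ (by positivity) hhalf m
    have h2 : ((K + 1 - m : ℕ) : ℝ) ^ m ≤ (K.descFactorial m : ℝ) := by
      exact_mod_cast Nat.pow_sub_le_descFactorial K m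
    have h3 : (K.descFactorial m : ℝ) = (m.factorial : ℝ) * (K.choose m : ℝ) := by
      exact_mod_cast Nat.descFactorial_eq_factorial_mul_choose K m
    rw [div_le_iff₀ (by positivity : (0:ℝ) < (m.factorial : ℝ))]
    calc (X / 2) ^ m ≤ (K.descFactorial m : ℝ) := h1.trans h2
      _ = (K.choose m : ℝ) * m.factorial := by rw [h3]; ring
  -- the key counting bound on the correlation sum
  set xseq : ℕ → ℝ := fun n => (b : ℝ) * (n : ℝ) ^ 2 / (q : ℝ) with hxseq
  have hbeta : ∀ j : ℕ, j < K → nthBeta N xseq (j + 1) = 0 := by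
    intro j hj
    exact nthBeta_eq_zero N xseq K j
      ((hK ▸ count_zero_fracts N q u v b hquv hq0).trans (le_of_eq rfl)) hj
  set S : Finset (Fin m → Fin N) := Finset.univ.filter (fun j : Fin m → Fin N =>
      StrictMono j ∧ ∀ i, (j i : ℕ) < K) with hS
  have hScard : K.choose m ≤ S.card := card_strictMono_tuples N K m hN hKN
  have hSsum : (S.card : ℝ) * f (fun _ => 0)
      ≤ ∑ j ∈ Finset.univ.filter (fun j : Fin m → Fin N => StrictMono j),
          f fun i => (N:ℝ) * nthBeta N xseq ((j i : ℕ) + 1) := by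
    have hval : ∀ j ∈ S, (f fun i => (N:ℝ) * nthBeta N xseq ((j i : ℕ) + 1))
        = f (fun _ => 0) := by
      intro j hj
      simp only [hS, Finset.mem_filter] at hj
      congr 1
      funext i
      rw [hbeta _ (hj.2.2 i), mul_zero]
    have hsub : S ⊆ Finset.univ.filter (fun j : Fin m → Fin N => StrictMono j) := by
      intro j hj
      simp only [hS, Finset.mem_filter] at hj ⊢
      exact ⟨hj.1, hj.2.1⟩
    calc (S.card : ℝ) * f (fun _ => 0)
        = ∑ j ∈ S, f fun i => (N:ℝ) * nthBeta N xseq ((j i : ℕ) + 1) := by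
          rw [Finset.sum_congr rfl hval, Finset.sum_const, nsmul_eq_mul]
      _ ≤ _ := Finset.sum_le_sum_of_subset_of_nonneg hsub (fun _ _ _ => hnonneg _)
  -- final assembly
  rw [corr]
  have hfinal : ((2:ℝ) ^ m * m.factorial)⁻¹ * X ^ m * f (fun _ => 0)
      ≤ ∑ j ∈ Finset.univ.filter (fun j : Fin m → Fin N => StrictMono j),
          f fun i => (N:ℝ) * nthBeta N xseq ((j i : ℕ) + 1) := by
    refine le_trans ?_ hSsum
    apply mul_le_mul_of_nonneg_right _ h0.le
    have h1 : ((2:ℝ) ^ m * m.factorial)⁻¹ * X ^ m = (X / 2) ^ m / m.factorial := by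
      rw [div_pow X 2 m, div_div, inv_mul_eq_div]
    rw [h1]
    refine hchoose.trans ?_
    exact_mod_cast hScard
  calc ((2:ℝ) ^ m * m.factorial)⁻¹ * f (fun _ => 0) * X ^ m / N
      = (N:ℝ)⁻¹ * (((2:ℝ) ^ m * m.factorial)⁻¹ * X ^ m * f (fun _ => 0)) := by ring
    _ ≤ _ := by
        apply mul_le_mul_of_nonneg_left hfinal (by positivity)
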